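/- Let V be a finite-dimensional real vector space, let α₁, …, α_r ∈ V, let F ⊂ V be a finite set, and let μ, λ ∈ V. Suppose that for every positive integer n there exist nonnegative integers n₁, …, n_r and an element ν_n ∈ F such that nμ = nλ − Σᵢ nᵢαᵢ + ν_n. Then λ − μ lies in the convex cone generated by α₁, …, α_r; that is, λ − μ = Σᵢ xᵢαᵢ for some nonnegative real numbers x₁, …, x_r. -/

import Mathlib

open Filter Topology

/-- Conical Carathéodory: a nonnegative combination can be rewritten as a nonnegative
combination supported on a linearly independent subfamily. -/
lemma carath_cone {W : Type*} [AddCommGroup W] [Module ℝ W] {r : ℕ} (β : Fin r → W) :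
    ∀ (n : ℕ) (x : Fin r → ℝ), (Finset.univ.filter fun i => x i ≠ 0).card ≤ n →
      (∀ i, 0 ≤ x i) →
    ∃ s : Finset (Fin r), LinearIndependent ℝ (fun i : s => β (i : Fin r)) ∧
      ∃ y : Fin r → ℝ, (∀ i, 0 ≤ y i) ∧ (∀ i, i ∉ s → y i = 0) ∧
        ∑ i, y i • β i = ∑ i, x i • β i := by
  intro n
  induction n with
  | zero =>
      intro x hcard hx
      have hx0 : ∀ i, x i = 0 := by
        intro i; by_contra hne
        have hmem : i ∈ Finset.univ.filter fun i => x i ≠ 0 := by simp [hne]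
        have := Finset.card_pos.mpr ⟨i, hmem⟩; omega
      refine ⟨∅, ?_, x, hx, fun i _ => hx0 i, rfl⟩
      exact linearIndependent_empty_type
  | succ n ih =>
      intro x hcard hx
      by_cases hli : LinearIndependent ℝ
          (fun i : (Finset.univ.filter fun i => x i ≠ 0) => β (i : Fin r))
      · exact ⟨_, hli, x, hx, fun i hi => by simpa using hi, rfl⟩
      · set s₀ := Finset.univ.filter fun i => x i ≠ 0 with hs₀
        rw [Fintype.linearIndependent_iff] at hli
        push_neg at hli
        obtain ⟨g, hg0, j, hgj⟩ := hli
        have key : ∃ c : Fin r → ℝ, (∀ i, c i ≠ 0 → x i ≠ 0) ∧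
            (∑ i, c i • β i = 0) ∧ ∃ i, 0 < c i := by
          classical
          set c0 : Fin r → ℝ := fun i => if h : i ∈ s₀ then g ⟨i, h⟩ else 0 with hc0
          have hsupp : ∀ i, c0 i ≠ 0 → x i ≠ 0 := by
            intro i hi
            by_contra hxi
            have : i ∉ s₀ := by simp [hs₀, hxi]
            simp [hc0, this] at hi
          have hsum : ∑ i, c0 i • β i = 0 := by
            rw [← Finset.sum_subset (Finset.subset_univ s₀)]
            · rw [← hg0, ← Finset.sum_attach s₀ (fun i => c0 i • β i)]
              exact Finset.sum_congr rfl fun i _ => by simp [hc0, i.2]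
            · intro i _ hi; simp [hc0, hi]
          by_cases hpos : ∃ i, 0 < c0 i
          · exact ⟨c0, hsupp, hsum, hpos⟩
          · push_neg at hpos
            refine ⟨-c0, fun i hi => hsupp i (by simpa using hi), by
              simp [neg_smul, Finset.sum_neg_distrib, hsum], ⟨j, ?_⟩⟩
            have hcj : c0 (j : Fin r) = g j := by simp [hc0, j.2]
            have : c0 (j : Fin r) ≠ 0 := by rw [hcj]; exact hgj
            have := lt_of_le_of_ne (hpos (j : Fin r)) this
            simpa using neg_pos.mpr this
        obtain ⟨c, hcx, hcsum, i₁, hi₁⟩ := key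
        set T := Finset.univ.filter fun i => 0 < c i with hT
        have hTne : T.Nonempty := ⟨i₁, by simp [hT, hi₁]⟩
        obtain ⟨i₀, hi₀T, hmin⟩ := Finset.exists_min_image T (fun i => x i / c i) hTne
        have hci₀ : 0 < c i₀ := by simpa [hT] using hi₀T
        set t := x i₀ / c i₀ with ht
        have ht0 : 0 ≤ t := div_nonneg (hx i₀) hci₀.le
        set y : Fin r → ℝ := fun i => x i - t * c i with hy
        have hy0 : ∀ i, 0 ≤ y i := by
          intro i
          rcases le_or_gt (c i) 0 with hc | hc
          · have : t * c i ≤ 0 := mul_nonpos_iff.mpr (Or.inl ⟨ht0, hc⟩)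
            have := hx i; simp only [hy]; linarith
          · have hmem : i ∈ T := by simp [hT, hc]
            have h1 : t ≤ x i / c i := hmin i hmem
            have : t * c i ≤ x i := by
              rw [div_eq_inv_mul] at h1
              calc t * c i ≤ ((c i)⁻¹ * x i) * c i := by nlinarith
                _ = x i := by field_simp
            simp only [hy]; linarith
        have hyi₀ : y i₀ = 0 := by
          simp only [hy, ht]; field_simp; ring
        have hysum : ∑ i, y i • β i = ∑ i, x i • β i := by
          simp only [hy, sub_smul, Finset.sum_sub_distrib, mul_smul,
            ← Finset.smul_sum, hcsum, smul_zero, sub_zero]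
        have hi₀s : i₀ ∈ s₀ := by simp [hs₀, hcx i₀ hci₀.ne']
        have hsub : (Finset.univ.filter fun i => y i ≠ 0) ⊆ s₀.erase i₀ := by
          intro i hi
          simp only [Finset.mem_filter, Finset.mem_univ, true_and] at hi
          refine Finset.mem_erase.mpr ⟨?_, ?_⟩
          · rintro rfl; exact hi hyi₀
          · have hxi : x i ≠ 0 := by
              by_contra hxi
              have hci : c i = 0 := by
                by_contra hc; exact (hcx i hc) hxi
              exact hi (by simp [hy, hxi, hci])
            simp [hs₀, hxi]
        have hcard' : (Finset.univ.filter fun i => y i ≠ 0).card ≤ n := by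
          have h1 := Finset.card_le_card hsub
          have h2 := Finset.card_erase_of_mem hi₀s
          have h3 : 1 ≤ s₀.card := Finset.card_pos.mpr ⟨i₀, hi₀s⟩
          omega
        obtain ⟨s, hls, y', hy'1, hy'2, hy'3⟩ := ih y hcard' hy0
        exact ⟨s, hls, y', hy'1, hy'2, hy'3.trans hysum⟩

lemma sum_eq_attach {W : Type*} [AddCommGroup W] [Module ℝ W] {r : ℕ} (β : Fin r → W)
    (s : Finset (Fin r)) (y : Fin r → ℝ) (hy : ∀ i ∉ s, y i = 0) :
    ∑ i, y i • β i = ∑ i : s, y (i : Fin r) • β (i : Fin r) := by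
  rw [Finset.univ_eq_attach, Finset.sum_attach s (fun i => y i • β i)]
  exact (Finset.sum_subset (Finset.subset_univ s) (fun i _ hi => by simp [hy i hi])).symm

/-- A finitely generated cone in a finite-dimensional real normed space is closed. -/
lemma cone_isClosed {W : Type*} [NormedAddCommGroup W] [NormedSpace ℝ W]
    [FiniteDimensional ℝ W] {r : ℕ} (β : Fin r → W) :
    IsClosed {v : W | ∃ x : Fin r → ℝ, (∀ i, 0 ≤ x i) ∧ v = ∑ i, x i • β i} := by
  classical
  have hset : {v : W | ∃ x : Fin r → ℝ, (∀ i, 0 ≤ x i) ∧ v = ∑ i, x i • β i} =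
      ⋃ s ∈ {s : Finset (Fin r) | LinearIndependent ℝ (fun i : s => β (i : Fin r))},
        (fun y : s → ℝ => ∑ i : s, y i • β (i : Fin r)) '' {y | ∀ i, 0 ≤ y i} := by
    ext v
    simp only [Set.mem_setOf_eq, Set.mem_iUnion, Set.mem_image, exists_prop]
    constructor
    · rintro ⟨x, hx, rfl⟩
      obtain ⟨s, hls, y, hy0, hys, hsum⟩ :=
        carath_cone β (Finset.univ.filter fun i => x i ≠ 0).card x le_rfl hx
      exact ⟨s, hls, fun i => y i, fun i => hy0 i,
        by rw [← sum_eq_attach β s y hys, hsum]⟩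
    · rintro ⟨s, _, y, hy0, rfl⟩
      refine ⟨fun i => if h : i ∈ s then y ⟨i, h⟩ else 0, fun i => ?_, ?_⟩
      · dsimp only; split
        · exact hy0 _
        · exact le_rfl
      · rw [sum_eq_attach β s _ (fun i hi => by simp [hi])]
        exact (Finset.sum_congr rfl fun i _ => by simp [i.2]).symm
  rw [hset]
  refine Set.Finite.isClosed_biUnion (Set.toFinite _) ?_
  intro s hs
  have horth : IsClosed {y : s → ℝ | ∀ i, 0 ≤ y i} := by
    have : {y : s → ℝ | ∀ i, 0 ≤ y i} = ⋂ i, (fun y : s → ℝ => y i) ⁻¹' Set.Ici 0 := by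
      ext y; simp [Set.mem_iInter]
    rw [this]
    exact isClosed_iInter fun i => isClosed_Ici.preimage (continuous_apply i)
  let g : (s → ℝ) →ₗ[ℝ] W :=
    { toFun := fun y => ∑ i : s, y i • β (i : Fin r)
      map_add' := fun y z => by simp [add_smul, Finset.sum_add_distrib]
      map_smul' := fun a y => by simp [mul_smul, Finset.smul_sum] }
  have hker : LinearMap.ker g = ⊥ := by
    rw [LinearMap.ker_eq_bot']
    intro y hy
    have := (Fintype.linearIndependent_iff.mp hs) y hy
    funext i; exact this i
  have hce : IsClosedEmbedding g := LinearMap.isClosedEmbedding_of_injective hker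
  exact hce.isClosedMap _ horth

theorem stmt_6 {V : Type*} [AddCommGroup V] [Module ℝ V] [FiniteDimensional ℝ V]
    (r : ℕ) (α : Fin r → V) (F : Set V) (hF : F.Finite) (μ lam : V)
    (h : ∀ n : ℕ, 0 < n → ∃ (c : Fin r → ℕ) (ν : V), ν ∈ F ∧
      (n : ℝ) • μ = (n : ℝ) • lam - (∑ i, (c i : ℝ) • α i) + ν) :
    ∃ x : Fin r → ℝ, (∀ i, 0 ≤ x i) ∧ lam - μ = ∑ i, x i • α i := by
  classical
  set e := (Module.finBasis ℝ V).equivFun with he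
  set β : Fin r → (Fin (Module.finrank ℝ V) → ℝ) := fun i => e (α i) with hβ
  have hC := cone_isClosed β
  choose c ν hν heq using fun n : ℕ => h (n + 1) n.succ_pos
  have key : ∀ n : ℕ, ∑ i, (c n i : ℝ) • β i =
      ((n : ℝ) + 1) • (e lam - e μ) + e (ν n) := by
    intro n
    have E := congrArg e (heq n)
    simp only [map_smul, map_sub, map_add, map_sum, Nat.cast_add, Nat.cast_one] at E
    rw [smul_sub, E]; abel
  have hmem : ∀ n : ℕ,
      (e lam - e μ) + ((n : ℝ) + 1)⁻¹ • e (ν n) ∈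
        {v | ∃ x : Fin r → ℝ, (∀ i, 0 ≤ x i) ∧ v = ∑ i, x i • β i} := by
    intro n
    have hn : ((n : ℝ) + 1) ≠ 0 := by positivity
    refine ⟨fun i => (c n i : ℝ) / ((n : ℝ) + 1), fun i => by positivity, ?_⟩
    calc (e lam - e μ) + ((n : ℝ) + 1)⁻¹ • e (ν n)
        = ((n : ℝ) + 1)⁻¹ • (((n : ℝ) + 1) • (e lam - e μ) + e (ν n)) := by
          rw [smul_add, smul_smul, inv_mul_cancel₀ hn, one_smul]
      _ = ((n : ℝ) + 1)⁻¹ • ∑ i, (c n i : ℝ) • β i := by rw [key n]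
      _ = ∑ i, ((c n i : ℝ) / ((n : ℝ) + 1)) • β i := by
          rw [Finset.smul_sum]
          exact Finset.sum_congr rfl fun i _ => by
            rw [smul_smul, div_eq_inv_mul]
  obtain ⟨M, hM⟩ := (hF.image fun w => ‖e w‖).bddAbove
  have hM' : ∀ w ∈ F, ‖e w‖ ≤ M := fun w hw => hM ⟨w, hw, rfl⟩
  have hb : Tendsto (fun n : ℕ => ((n : ℝ) + 1)⁻¹ • e (ν n)) atTop (𝓝 0) := by
    rw [tendsto_zero_iff_norm_tendsto_zero]
    refine squeeze_zero (fun n => norm_nonneg _)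
      (g := fun n : ℕ => ((n : ℝ) + 1)⁻¹ * M) (fun n => ?_) ?_
    · rw [norm_smul, Real.norm_of_nonneg (by positivity)]
      exact mul_le_mul_of_nonneg_left (hM' _ (hν n)) (by positivity)
    · have := tendsto_one_div_add_atTop_nhds_zero_nat.mul_const M
      simpa [one_div] using this
  have hu : Tendsto (fun n : ℕ => (e lam - e μ) + ((n : ℝ) + 1)⁻¹ • e (ν n))
      atTop (𝓝 (e lam - e μ)) := by
    simpa using tendsto_const_nhds.add hb
  have hmemC : (e lam - e μ) ∈
      {v | ∃ x : Fin r → ℝ, (∀ i, 0 ≤ x i) ∧ v = ∑ i, x i • β i} :=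
    hC.mem_of_tendsto hu (Filter.Eventually.of_forall hmem)
  obtain ⟨x, hx0, hxe⟩ := hmemC
  refine ⟨x, hx0, e.injective ?_⟩
  rw [map_sub, map_sum]
  simpa [hβ] using hxe
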